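/- Let m ≥ 1, let z be a negative real number, and let L₁,…,L_m and L̂₁,…,L̂_m be symmetric positive definite real K×K matrices; let D₁ be the head of the S-fraction recursion. Suppose U¹,…,U^{m+1} are real K×K matrices with U^{m+1} = 0 satisfying the block three-point scheme L₁(U² − U¹) + z·L̂₁⁻¹U¹ = −I and, for k = 2,…,m, L_k(U^{k+1} − U^k) − L_{k−1}(U^k − U^{k−1}) + z·L̂_k⁻¹U^k = 0. Then U¹ = D₁⁻¹, i.e., the boundary block of the solution of the three-point scheme equals the value of the matrix Stieltjes continued fraction. -/

import Mathlib

open Matrix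

private lemma smul_posDef {K : ℕ} {c : ℝ} (hc : 0 < c)
    {M : Matrix (Fin K) (Fin K) ℝ} (hM : M.PosDef) : (c • M).PosDef := by
  refine ⟨?_, fun x hx => ?_⟩
  · unfold Matrix.IsHermitian
    rw [conjTranspose_smul, hM.1]
    simp
  · exact (hM.smul hc).2 hx

private lemma inv_add_inv_inv {K : ℕ} {A B : Matrix (Fin K) (Fin K) ℝ}
    (hA : A.PosDef) (hB : B.PosDef) :
    (A⁻¹ + B⁻¹)⁻¹ = B * (B + A)⁻¹ * A := by
  have hS : (B + A).PosDef := hB.add hA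
  have hdA : IsUnit A.det := hA.det_pos.ne'.isUnit
  have hdB : IsUnit B.det := hB.det_pos.ne'.isUnit
  have hdS : IsUnit (B + A).det := hS.det_pos.ne'.isUnit
  refine Matrix.inv_eq_right_inv ?_
  have e1 : A⁻¹ + B⁻¹ = A⁻¹ * (B + A) * B⁻¹ := by
    rw [Matrix.mul_add, Matrix.nonsing_inv_mul _ hdA, Matrix.add_mul,
      Matrix.one_mul, Matrix.mul_assoc, Matrix.mul_nonsing_inv _ hdB,
      Matrix.mul_one, add_comm]
  rw [e1]
  simp only [Matrix.mul_assoc]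
  rw [← Matrix.mul_assoc B⁻¹ B, Matrix.nonsing_inv_mul _ hdB, Matrix.one_mul,
    ← Matrix.mul_assoc (B + A), Matrix.mul_nonsing_inv _ hdS, Matrix.one_mul,
    Matrix.nonsing_inv_mul _ hdA]

theorem stmt14 {K : ℕ} (m : ℕ) (hm : 1 ≤ m) (z : ℝ) (hz : z < 0)
    (L Lhat : ℕ → Matrix (Fin K) (Fin K) ℝ)
    (hL : ∀ k, 1 ≤ k → k ≤ m → (L k).PosDef)
    (hLhat : ∀ k, 1 ≤ k → k ≤ m → (Lhat k).PosDef)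
    -- the S-fraction backward recursion
    (D : ℕ → Matrix (Fin K) (Fin K) ℝ)
    (hDm : D m = L m - z • (Lhat m)⁻¹)
    (hDk : ∀ k, 1 ≤ k → k < m →
      D k = ((L k)⁻¹ + (D (k + 1))⁻¹)⁻¹ - z • (Lhat k)⁻¹)
    -- the block three-point scheme with identity input
    (U : ℕ → Matrix (Fin K) (Fin K) ℝ)
    (hUtop : U (m + 1) = 0)
    (hU1 : L 1 * (U 2 - U 1) + z • ((Lhat 1)⁻¹ * U 1) = -1)
    (hUk : ∀ k, 2 ≤ k → k ≤ m →
      L k * (U (k + 1) - U k) - L (k - 1) * (U k - U (k - 1)) +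
        z • ((Lhat k)⁻¹ * U k) = 0) :
    U 1 = (D 1)⁻¹ := by
  have hzpos : 0 < -z := by linarith
  -- positive-definite smul of inverse of Lhat
  have hzl : ∀ k, 1 ≤ k → k ≤ m → ((-z) • (Lhat k)⁻¹).PosDef := fun k h1 h2 =>
    smul_posDef hzpos (hLhat k h1 h2).inv
  -- key downward induction
  have key : ∀ i k, 1 ≤ k → k ≤ m → m - k = i →
      (D k).PosDef ∧
      D k * U k = -(L k * (U (k + 1) - U k)) - z • ((Lhat k)⁻¹ * U k) := by
    intro i
    induction i with
    | zero =>
      intro k h1 h2 hi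
      have hk : k = m := le_antisymm h2 (by omega)
      subst hk
      have hD : D k = L k + (-z) • (Lhat k)⁻¹ := by
        rw [hDm]; module
      constructor
      · rw [hD]; exact (hL k h1 h2).add (hzl k h1 h2)
      · rw [hD, hUtop]
        rw [Matrix.add_mul]
        rw [show (-z) • (Lhat k)⁻¹ * U k = (-z) • ((Lhat k)⁻¹ * U k) from
          smul_mul_assoc _ _ _]
        rw [Matrix.mul_sub, Matrix.mul_zero]
        module
    | succ i ih =>
      intro k h1 h2 hi
      have hklt : k < m := by omega
      have ⟨hDk1pos, hDk1eq⟩ := ih (k + 1) (by omega) (by omega) (by omega)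
      have hLk : (L k).PosDef := hL k h1 (le_of_lt hklt)
      -- use the scheme at k+1
      have hsch := hUk (k + 1) (by omega) (by omega)
      simp only [Nat.add_sub_cancel] at hsch
      -- D (k+1) * U (k+1) = L k * U k - L k * U (k+1)
      have hflux : D (k + 1) * U (k + 1) = L k * (U k - U (k + 1)) := by
        simp only [Matrix.mul_sub] at hsch hDk1eq ⊢
        rw [hDk1eq]
        linear_combination (norm := module) - hsch
      -- hence (D (k+1) + L k) * U (k+1) = L k * U k
      have hsum : (D (k + 1) + L k) * U (k + 1) = L k * U k := by
        simp only [Matrix.add_mul, Matrix.mul_sub] at hflux ⊢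
        linear_combination (norm := module) hflux
      have hSpos : (D (k + 1) + L k).PosDef := hDk1pos.add hLk
      have hdS : IsUnit (D (k + 1) + L k).det := hSpos.det_pos.ne'.isUnit
      -- the continued-fraction identity
      have hinv : ((L k)⁻¹ + (D (k + 1))⁻¹)⁻¹ =
          D (k + 1) * (D (k + 1) + L k)⁻¹ * L k := inv_add_inv_inv hLk hDk1pos
      have hmid : ((L k)⁻¹ + (D (k + 1))⁻¹)⁻¹ * U k = D (k + 1) * U (k + 1) := by
        rw [hinv, Matrix.mul_assoc, Matrix.mul_assoc, ← hsum,
          ← Matrix.mul_assoc (D (k+1) + L k)⁻¹, Matrix.nonsing_inv_mul _ hdS,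
          Matrix.one_mul]
      have hDkeq : D k = ((L k)⁻¹ + (D (k + 1))⁻¹)⁻¹ + (-z) • (Lhat k)⁻¹ := by
        rw [hDk k h1 hklt]; module
      constructor
      · rw [hDkeq]
        have hFpos : ((L k)⁻¹ + (D (k + 1))⁻¹).PosDef := hLk.inv.add hDk1pos.inv
        exact hFpos.inv.add (hzl k h1 (le_of_lt hklt))
      · rw [hDkeq, Matrix.add_mul, hmid, hflux]
        rw [show (-z) • (Lhat k)⁻¹ * U k = (-z) • ((Lhat k)⁻¹ * U k) from
          smul_mul_assoc _ _ _]
        rw [Matrix.mul_sub, Matrix.mul_sub]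
        module
  have ⟨hD1pos, hD1eq⟩ := key (m - 1) 1 le_rfl hm (by omega)
  have hone : D 1 * U 1 = 1 := by
    rw [hD1eq]
    rw [Matrix.mul_sub] at hU1 ⊢
    linear_combination (norm := module) - hU1
  exact (Matrix.inv_eq_right_inv hone).symm
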